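/- Let H ∈ H(μ,ν,λ) be an h-array with the standard boundary. Then H is a hive (satisfies RC(1), RC(2), RC(3)) if and only if T2(H) is a GZ scheme in GZ(ν, λ-μ, μ); that is, T2(H) is a GT pattern of type ν, weight λ-μ, and satisfies the exponent bounds ε_j^{(i)}(T2(H)) ≤ μ_i - μ_{i+1} for all i, j. -/
import Mathlib


open Finset

/-- Interlacing condition IC(1): `t_j^(i+1) ≥ t_j^(i)` for `1 ≤ j ≤ i ≤ n-1`. -/
def IsIC1 (n : ℕ) (t : ℕ → ℕ → ℤ) : Prop :=
  ∀ i j : ℕ, 1 ≤ j → j ≤ i → i + 1 ≤ n → t i j ≤ t (i + 1) j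

/-- Interlacing condition IC(2): `t_j^(i) ≥ t_{j+1}^(i+1)`. -/
def IsIC2 (n : ℕ) (t : ℕ → ℕ → ℤ) : Prop :=
  ∀ i j : ℕ, 1 ≤ j → j ≤ i → i + 1 ≤ n → t (i + 1) (j + 1) ≤ t i j

/-- Rhombus condition RC(1): `h_{a,b} + h_{a-1,b-1} ≥ h_{a-1,b} + h_{a,b-1}` for `1 ≤ a < b ≤ n`. -/
def IsRC1 (n : ℕ) (h : ℕ → ℕ → ℤ) : Prop :=
  ∀ a b : ℕ, 1 ≤ a → a < b → b ≤ n →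
    h (a - 1) b + h a (b - 1) ≤ h a b + h (a - 1) (b - 1)

/-- Rhombus condition RC(2): `h_{a-1,b} + h_{a,b} ≥ h_{a,b+1} + h_{a-1,b-1}` for `1 ≤ a ≤ b < n`. -/
def IsRC2 (n : ℕ) (h : ℕ → ℕ → ℤ) : Prop :=
  ∀ a b : ℕ, 1 ≤ a → a ≤ b → b < n →
    h a (b + 1) + h (a - 1) (b - 1) ≤ h (a - 1) b + h a b

/-- Rhombus condition RC(3): `h_{a,b} + h_{a,b+1} ≥ h_{a+1,b+1} + h_{a-1,b}` for `1 ≤ a ≤ b < n`. -/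
def IsRC3 (n : ℕ) (h : ℕ → ℕ → ℤ) : Prop :=
  ∀ a b : ℕ, 1 ≤ a → a ≤ b → b < n →
    h (a + 1) (b + 1) + h (a - 1) b ≤ h a b + h a (b + 1)

/-- First derived t-array `T1`: `x_{b+1-a}^{(n-a)} = h_{a,b+1} - h_{a,b}`,
so `x_j^(i) = h_{n-i, n-i+j} - h_{n-i, n-i+j-1}`. -/
def dT1 (n : ℕ) (h : ℕ → ℕ → ℤ) (i j : ℕ) : ℤ :=
  h (n - i) (n - i + j) - h (n - i) (n - i + j - 1)

/-- Second derived t-array `T2`: `y_{a+1}^{(b+1)} = h_{a+1,b+1} - h_{a,b+1}`,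
so `y_j^(i) = h_{j,i} - h_{j-1,i}`. -/
def dT2 (h : ℕ → ℕ → ℤ) (i j : ℕ) : ℤ :=
  h j i - h (j - 1) i

/-- Third derived t-array `T3`: `z_{a+1}^{(n+a-b)} = h_{a+1,b+1} - h_{a,b}`,
so `z_j^(i) = h_{j, n+j-i} - h_{j-1, n+j-1-i}`. -/
def dT3 (n : ℕ) (h : ℕ → ℕ → ℤ) (i j : ℕ) : ℤ :=
  h j (n + j - i) - h (j - 1) (n + j - 1 - i)

/-- The dual t-array: `s_j^(i) = -t_{i+1-j}^(i)`. -/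
def dualT (t : ℕ → ℕ → ℤ) (i j : ℕ) : ℤ := - t i (i + 1 - j)

/-- The weight of a t-array: `w_i = Σ_{k=1}^i t_k^(i) - Σ_{k=1}^{i-1} t_k^(i-1)`. -/
def wt (t : ℕ → ℕ → ℤ) (i : ℕ) : ℤ :=
  (∑ k ∈ Finset.Icc 1 i, t i k) - ∑ k ∈ Finset.Icc 1 (i - 1), t (i - 1) k

/-- The Gelfand–Zelevinsky exponent
`ε_j^(i)(T) = Σ_{1 ≤ h < j} (t_h^(i+1) - 2 t_h^(i) + t_h^(i-1)) + (t_j^(i+1) - t_j^(i))`. -/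
def expo (t : ℕ → ℕ → ℤ) (i j : ℕ) : ℤ :=
  (∑ h ∈ Finset.Icc 1 (j - 1), (t (i + 1) h - 2 * t i h + t (i - 1) h)) +
    (t (i + 1) j - t i j)

/-- Boundary conditions for an h-array in `H(μ,ν,λ)`. -/
def IsBoundary (n : ℕ) (mu nu lam : ℕ → ℤ) (h : ℕ → ℕ → ℤ) : Prop :=
  h 0 0 = 0 ∧
  (∀ i, 1 ≤ i → i ≤ n → h 0 i = ∑ k ∈ Finset.Icc 1 i, mu k) ∧
  (∀ i, 1 ≤ i → i ≤ n →
    h i n = (∑ k ∈ Finset.Icc 1 n, mu k) + ∑ k ∈ Finset.Icc 1 i, nu k) ∧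
  (∀ i, 1 ≤ i → i ≤ n → h i i = ∑ k ∈ Finset.Icc 1 i, lam k)

/-- A weakly decreasing sequence of nonnegative integers of length `n`
(a polynomial dominant weight). -/
def IsDomWeight (n : ℕ) (mu : ℕ → ℤ) : Prop :=
  (∀ i, 1 ≤ i → i + 1 ≤ n → mu (i + 1) ≤ mu i) ∧ (∀ i, 1 ≤ i → i ≤ n → 0 ≤ mu i)

lemma tele_aux (f : ℕ → ℤ) : ∀ m : ℕ,
    ∑ k ∈ Finset.Icc 1 m, (f k - f (k - 1)) = f m - f 0 := by
  intro m
  induction m with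
  | zero => simp
  | succ m ih =>
      rw [Finset.sum_Icc_succ_top (by omega : 1 ≤ m + 1), ih]
      simp only [Nat.add_sub_cancel]
      ring

lemma sum_diff_aux (f : ℕ → ℤ) (m : ℕ) (hm : 1 ≤ m) :
    (∑ k ∈ Finset.Icc 1 m, f k) - ∑ k ∈ Finset.Icc 1 (m - 1), f k = f m := by
  cases m with
  | zero => omega
  | succ m =>
      rw [Finset.sum_Icc_succ_top (by omega : 1 ≤ m + 1)]
      simp only [Nat.add_sub_cancel]
      ring

/-- Theorem 3.2 (2): `H ∈ H(μ,ν,λ)` is a hive iff `T2(H)` is a GZ scheme in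
`GZ(ν, λ-μ, μ)`, i.e. a GT pattern of type `ν`, weight `λ-μ`, with exponents
bounded by `μ_i - μ_{i+1}`. -/
theorem hive_iff_dT2_GZ (n : ℕ) (mu nu lam : ℕ → ℤ) (h : ℕ → ℕ → ℤ)
    (hmu : IsDomWeight n mu) (hnu : IsDomWeight n nu) (hlam : IsDomWeight n lam)
    (hbd : IsBoundary n mu nu lam h) :
    (IsRC1 n h ∧ IsRC2 n h ∧ IsRC3 n h) ↔
      (IsIC1 n (dT2 h) ∧ IsIC2 n (dT2 h) ∧
        (∀ j, 1 ≤ j → j ≤ n → dT2 h n j = nu j) ∧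
        (∀ i, 1 ≤ i → i ≤ n → wt (dT2 h) i = lam i - mu i) ∧
        (∀ i j, 1 ≤ j → j ≤ i → i + 1 ≤ n →
          expo (dT2 h) i j ≤ mu i - mu (i + 1))) := by
  obtain ⟨h00, hb0, hbn, hdg⟩ := hbd
  have h0eq : ∀ m, m ≤ n → h 0 m = ∑ k ∈ Finset.Icc 1 m, mu k := by
    intro m hm
    rcases Nat.eq_zero_or_pos m with rfl | hm1
    · simpa using h00
    · exact hb0 m hm1 hm
  have hdiag : ∀ m, m ≤ n → h m m = ∑ k ∈ Finset.Icc 1 m, lam k := by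
    intro m hm
    rcases Nat.eq_zero_or_pos m with rfl | hm1
    · simpa using h00
    · exact hdg m hm1 hm
  have key : ∀ (c m : ℕ), ∑ k ∈ Finset.Icc 1 m, dT2 h c k = h m c - h 0 c := by
    intro c m
    rw [← tele_aux (fun k => h k c) m]
    exact Finset.sum_congr rfl (fun k _ => rfl)
  have key3 : ∀ i j : ℕ,
      ∑ k ∈ Finset.Icc 1 j, (dT2 h (i + 1) k - 2 * dT2 h i k + dT2 h (i - 1) k)
        = (h j (i + 1) - 2 * h j i + h j (i - 1)) -
            (h 0 (i + 1) - 2 * h 0 i + h 0 (i - 1)) := by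
    intro i j
    rw [← tele_aux (fun k => h k (i + 1) - 2 * h k i + h k (i - 1)) j]
    exact Finset.sum_congr rfl (fun k _ => by simp only [dT2]; ring)
  have expo_eq : ∀ i j : ℕ, 1 ≤ j → j ≤ i → i + 1 ≤ n →
      expo (dT2 h) i j =
        (mu i - mu (i + 1)) +
          (h j (i + 1) + h (j - 1) (i - 1) - h (j - 1) i - h j i) := by
    intro i j hj hji hin
    have hm1 := sum_diff_aux mu (i + 1) (by omega)
    simp only [Nat.add_sub_cancel] at hm1
    have hm2 := sum_diff_aux mu i (by omega)
    have e1 := h0eq (i + 1) (by omega)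
    have e2 := h0eq i (by omega)
    have e3 := h0eq (i - 1) (by omega)
    simp only [expo]
    rw [key3 i (j - 1)]
    simp only [dT2]
    rw [e1, e2, e3]
    linarith
  constructor
  · rintro ⟨rc1, rc2, rc3⟩
    refine ⟨?_, ?_, ?_, ?_, ?_⟩
    · intro i j hj hji hin
      have := rc1 j (i + 1) hj (by omega) hin
      simp only [Nat.add_sub_cancel] at this
      simp only [dT2]
      linarith
    · intro i j hj hji hin
      have := rc3 j i hj hji (by omega)
      simp only [dT2, Nat.add_sub_cancel]
      linarith
    · intro j hj hjn
      have hn1 : 1 ≤ n := le_trans hj hjn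
      have e1 := hbn j hj hjn
      have e2 : h (j - 1) n =
          (∑ k ∈ Finset.Icc 1 n, mu k) + ∑ k ∈ Finset.Icc 1 (j - 1), nu k := by
        rcases Nat.lt_or_ge 1 j with h2 | h2
        · exact hbn (j - 1) (by omega) (by omega)
        · have hj1 : j = 1 := le_antisymm h2 hj
          subst hj1
          simpa using hb0 n hn1 le_rfl
      have := sum_diff_aux nu j hj
      simp only [dT2]
      rw [e1, e2]
      linarith
    · intro i hi hin
      have e1 := key i i
      have e2 := key (i - 1) (i - 1)
      have e3 := hdiag i hin
      have e4 := hdiag (i - 1) (by omega)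
      have e5 := h0eq i hin
      have e6 := h0eq (i - 1) (by omega)
      have e7 := sum_diff_aux lam i hi
      have e8 := sum_diff_aux mu i hi
      simp only [wt]
      rw [e1, e2, e3, e4, e5, e6]
      linarith
    · intro i j hj hji hin
      have := rc2 j i hj hji (by omega)
      rw [expo_eq i j hj hji hin]
      linarith
  · rintro ⟨ic1, ic2, -, -, eb⟩
    refine ⟨?_, ?_, ?_⟩
    · intro a b ha hab hbn'
      have := ic1 (b - 1) a ha (by omega) (by omega)
      have e : b - 1 + 1 = b := by omega
      rw [e] at this
      simp only [dT2] at this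
      linarith
    · intro a b ha hab hbn'
      have := eb b a ha hab (by omega)
      rw [expo_eq b a ha hab (by omega)] at this
      linarith
    · intro a b ha hab hbn'
      have := ic2 b a ha hab (by omega)
      simp only [dT2, Nat.add_sub_cancel] at this
      linarith
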